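/- arXiv:1210.3083 — 2 statements merged into one kernel-verified Lean document; each statement's English description precedes it below -/
import Mathlib

section
/- There exists a universal constant C > 0 such that for every integer q ≥ 2 and every integer m ≥ 0, ∑_{p=0}^{m} ([p]_q [m−p])^{-1} ≤ C [m]^{-1}. -/
/-- `br m = max m 1`, the bracket convention `[m]` from the paper, as a real number. -/
noncomputable def br (m : ℤ) : ℝ := max (m : ℝ) 1

/-- `brf m k = [m]_k = [m]·[m-1]⋯[m-k+1]`, the modified falling factorial. -/
noncomputable def brf (m : ℤ) (k : ℕ) : ℝ := ∏ i ∈ Finset.range k, br (m - i)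

lemma br_ge_one (m : ℤ) : (1 : ℝ) ≤ br m := le_max_right _ _

lemma br_pos (m : ℤ) : (0 : ℝ) < br m := lt_of_lt_of_le one_pos (br_ge_one m)

lemma int_le_br (m : ℤ) : (m : ℝ) ≤ br m := le_max_left _ _

lemma br_le_c_br (m k : ℤ) (c : ℝ) (h1 : 1 ≤ c) (h2 : (m : ℝ) ≤ c * br k) :
    br m ≤ c * br k := by
  have := br_ge_one k
  exact max_le h2 (by nlinarith)

lemma brf_lb (p : ℤ) (q : ℕ) (hq : 2 ≤ q) : br p * br (p - 1) ≤ brf p q := by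
  unfold brf
  obtain ⟨r, rfl⟩ : ∃ r, q = 2 + r := ⟨q - 2, by omega⟩
  rw [Finset.prod_range_add]
  have h2 : ∏ i ∈ Finset.range 2, br (p - i) = br p * br (p - 1) := by
    rw [Finset.prod_range_succ, Finset.prod_range_one]
    norm_num
  rw [h2]
  have h3 : (1:ℝ) ≤ ∏ i ∈ Finset.range r, br (p - ((2 + i : ℕ) : ℤ)) := by
    calc (1:ℝ) = ∏ _i ∈ Finset.range r, (1:ℝ) := by simp
      _ ≤ _ := Finset.prod_le_prod (fun _ _ => zero_le_one) (fun i _ => br_ge_one _)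
  have h4 : (0:ℝ) ≤ br p * br (p - 1) :=
    (mul_pos (br_pos _) (br_pos _)).le
  nlinarith

lemma point (m p : ℕ) (hpm : p ≤ m) :
    (br p * br ((p : ℤ) - 1) * br ((m : ℤ) - p))⁻¹
      ≤ 2 * (br m)⁻¹ * (br p * br ((p : ℤ) - 1))⁻¹ + 8 * ((br (m : ℤ)) ^ 2)⁻¹ := by
  have hA := br_pos (p : ℤ)
  have hB := br_pos ((p : ℤ) - 1)
  have hD := br_pos ((m : ℤ) - p)
  have hM := br_pos (m : ℤ)
  have hA1 := br_ge_one (p : ℤ)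
  have hB1 := br_ge_one ((p : ℤ) - 1)
  have hD1 := br_ge_one ((m : ℤ) - p)
  have hM1 := br_ge_one (m : ℤ)
  set A := br (p : ℤ)
  set B := br ((p : ℤ) - 1)
  set D := br ((m : ℤ) - p)
  set M := br (m : ℤ)
  rcases le_or_gt (2 * p) m with hc | hc
  · -- M ≤ 2 D
    have hMD : M ≤ 2 * D := by
      apply br_le_c_br _ _ 2 (by norm_num)
      have := int_le_br ((m : ℤ) - p)
      have hc' : (m : ℝ) ≤ 2 * ((m : ℝ) - p) := by
        have : (2 * p : ℝ) ≤ m := by exact_mod_cast hc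
        linarith
      push_cast at this ⊢
      linarith
    have key : (A * B * D)⁻¹ ≤ 2 * M⁻¹ * (A * B)⁻¹ := by
      have hrw : 2 * M⁻¹ * (A * B)⁻¹ = (M * (A * B) / 2)⁻¹ := by
        field_simp
      rw [hrw]
      apply inv_anti₀
      · positivity
      · nlinarith [mul_pos hA hB]
    have : (0:ℝ) < 8 * (M ^ 2)⁻¹ := by positivity
    linarith
  · -- 2p > m : M ≤ 2A, M ≤ 4B
    have hMA : M ≤ 2 * A := by
      apply br_le_c_br _ _ 2 (by norm_num)
      have := int_le_br (p : ℤ)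
      have hc' : (m : ℝ) ≤ 2 * p := by
        have : (m : ℝ) < 2 * p := by exact_mod_cast hc
        linarith
      push_cast at this ⊢
      linarith
    have hMB : M ≤ 4 * B := by
      apply br_le_c_br _ _ 4 (by norm_num)
      have h1 := int_le_br ((p : ℤ) - 1)
      push_cast at h1
      have hc' : (m : ℝ) + 1 ≤ 2 * p := by
        have : (m : ℤ) + 1 ≤ 2 * p := by omega
        exact_mod_cast this
      push_cast
      linarith
    have key : (A * B * D)⁻¹ ≤ 8 * (M ^ 2)⁻¹ := by
      have hrw : 8 * (M ^ 2)⁻¹ = (M ^ 2 / 8)⁻¹ := by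
        field_simp
      rw [hrw]
      apply inv_anti₀
      · positivity
      · nlinarith [mul_pos hA hB]
    have : (0:ℝ) < 2 * M⁻¹ * (A * B)⁻¹ := by positivity
    linarith

lemma sum_ab (m : ℕ) :
    ∑ p ∈ Finset.range (m + 1), (br p * br ((p : ℤ) - 1))⁻¹ ≤ 3 - (br m)⁻¹ := by
  induction m with
  | zero =>
      rw [Finset.sum_range_one]
      norm_num [br]
  | succ n ih =>
      rw [Finset.sum_range_succ]
      rcases Nat.eq_zero_or_pos n with h0 | h1
      · subst h0
        rw [Finset.sum_range_one]
        norm_num [br]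
      · have hn1 : (1:ℝ) ≤ (n:ℝ) := by exact_mod_cast h1
        have hn0 : (0:ℝ) < (n:ℝ) := by linarith
        have hbn : br (n : ℤ) = (n : ℝ) := by
          unfold br
          rw [max_eq_left] <;> push_cast <;> linarith
        have hbn1 : br ((n + 1 : ℕ) : ℤ) = (n : ℝ) + 1 := by
          unfold br
          rw [max_eq_left] <;> push_cast <;> linarith
        have e2 : (((n + 1 : ℕ) : ℤ)) - 1 = (n : ℤ) := by push_cast; ring
        have hterm : (br ((n + 1 : ℕ) : ℤ) * br ((((n + 1 : ℕ)) : ℤ) - 1))⁻¹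
            = (n : ℝ)⁻¹ - ((n : ℝ) + 1)⁻¹ := by
          rw [hbn1, e2, hbn]
          have hn1' : (n:ℝ) + 1 ≠ 0 := by positivity
          field_simp
          ring
        rw [hterm, hbn1]
        rw [hbn] at ih
        linarith

/-- there is a universal constant `C > 0` such that for all `q ≥ 2` and `m ≥ 0`,
`∑_{p=0}^m ([p]_q [m-p])⁻¹ ≤ C [m]⁻¹`. -/
theorem sum_inv_brf_br_le :
    ∃ C : ℝ, 0 < C ∧ ∀ q : ℕ, 2 ≤ q → ∀ m : ℕ,
      ∑ p ∈ Finset.range (m + 1), (brf p q * br ((m : ℤ) - p))⁻¹ ≤ C * (br m)⁻¹ := by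
  refine ⟨22, by norm_num, ?_⟩
  intro q hq m
  have hM := br_pos (m : ℤ)
  have hM1 := br_ge_one (m : ℤ)
  calc ∑ p ∈ Finset.range (m + 1), (brf p q * br ((m : ℤ) - p))⁻¹
      ≤ ∑ p ∈ Finset.range (m + 1),
          (br p * br ((p : ℤ) - 1) * br ((m : ℤ) - p))⁻¹ := by
        apply Finset.sum_le_sum
        intro p _
        apply inv_anti₀
        · exact mul_pos (mul_pos (br_pos _) (br_pos _)) (br_pos _)
        · exact mul_le_mul_of_nonneg_right (brf_lb p q hq) (br_pos _).le
    _ ≤ ∑ p ∈ Finset.range (m + 1),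
          (2 * (br m)⁻¹ * (br p * br ((p : ℤ) - 1))⁻¹ + 8 * ((br (m : ℤ)) ^ 2)⁻¹) := by
        apply Finset.sum_le_sum
        intro p hp
        exact point m p (by simpa [Nat.lt_succ_iff] using Finset.mem_range.mp hp)
    _ = 2 * (br m)⁻¹ * (∑ p ∈ Finset.range (m + 1), (br p * br ((p : ℤ) - 1))⁻¹)
          + ((m : ℝ) + 1) * (8 * ((br (m : ℤ)) ^ 2)⁻¹) := by
        rw [Finset.sum_add_distrib, ← Finset.mul_sum, Finset.sum_const, Finset.card_range,
          nsmul_eq_mul]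
        push_cast
        ring
    _ ≤ 2 * (br m)⁻¹ * 3 + (2 * br m) * (8 * ((br (m : ℤ)) ^ 2)⁻¹) := by
        have h1 : ∑ p ∈ Finset.range (m + 1), (br p * br ((p : ℤ) - 1))⁻¹ ≤ 3 := by
          have h0 : (0:ℝ) < (br (m:ℤ))⁻¹ := inv_pos.mpr hM
          linarith [sum_ab m]
        have h2 : (m : ℝ) + 1 ≤ 2 * br m := by
          have := int_le_br (m : ℤ)
          push_cast at this
          linarith
        have h3 : (0:ℝ) ≤ 8 * ((br (m : ℤ)) ^ 2)⁻¹ := by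
          have : (0:ℝ) < (br (m:ℤ)) ^ 2 := by positivity
          positivity
        have h4 : (0:ℝ) ≤ 2 * (br (m:ℤ))⁻¹ := by
          have := inv_pos.mpr hM
          linarith
        nlinarith
    _ = 22 * (br m)⁻¹ := by
        have hne : br (m : ℤ) ≠ 0 := hM.ne'
        field_simp
        ring
end

section
/- There exists a universal constant C > 0 such that for all nonnegative integers k and l, ∑_{p=0}^{k} ∑_{q=0}^{l} ( [k]_2 [l]_2 / ( [p]_2 [k−p]_2 [q]_2 [l−q]_2 ) )^2 ≤ C. -/
lemma one_le_br (m : ℤ) : 1 ≤ br m := le_max_right _ _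

lemma brf_two (m : ℤ) : brf m 2 = br m * br (m - 1) := by
  simp [brf, Finset.prod_range_succ]

lemma one_le_brf2 (m : ℤ) : 1 ≤ brf m 2 := by
  rw [brf_two]
  nlinarith [one_le_br m, one_le_br (m - 1)]

lemma brf2_pos (m : ℤ) : 0 < brf m 2 := lt_of_lt_of_le one_pos (one_le_brf2 m)

lemma brf2_val (p : ℕ) (hp : 2 ≤ p) : brf (p : ℤ) 2 = (p : ℝ) * ((p : ℝ) - 1) := by
  have h2 : (2 : ℝ) ≤ (p : ℝ) := by exact_mod_cast hp
  rw [brf_two, br, br]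
  rw [max_eq_left (by exact_mod_cast (by linarith : (1:ℝ) ≤ (p:ℝ)))]
  rw [max_eq_left (by push_cast; linarith)]
  push_cast; ring

lemma sq_le_brf2 (p : ℕ) : (p : ℝ) ^ 2 ≤ 4 * brf (p : ℤ) 2 := by
  rcases Nat.lt_or_ge p 2 with h | h
  · interval_cases p <;> push_cast <;>
      nlinarith [one_le_brf2 (0:ℤ), one_le_brf2 (1:ℤ)]
  · rw [brf2_val p h]
    have h2 : (2 : ℝ) ≤ (p : ℝ) := by exact_mod_cast h
    nlinarith

lemma brf2_le (k : ℕ) : brf (k : ℤ) 2 ≤ (k : ℝ) ^ 2 + 1 := by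
  rcases Nat.lt_or_ge k 2 with h | h
  · interval_cases k <;>
      simp [brf_two, br] <;> norm_num
  · rw [brf2_val k h]
    have h2 : (2 : ℝ) ≤ (k : ℝ) := by exact_mod_cast h
    nlinarith

/-- key pointwise bound: `[k]_2 ≤ 9([p]_2 + [k-p]_2)`. -/
lemma key_bound (k p : ℕ) (hp : p ≤ k) :
    brf (k : ℤ) 2 ≤ 9 * (brf (p : ℤ) 2 + brf ((k : ℤ) - p) 2) := by
  set m : ℕ := k - p with hm
  have hcast : (k : ℤ) - p = (m : ℤ) := by omega
  rw [hcast]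
  have hk : (k : ℝ) = (p : ℝ) + (m : ℝ) := by
    have : k = p + m := by omega
    rw [this]; push_cast; ring
  nlinarith [brf2_le k, sq_le_brf2 p, sq_le_brf2 m, one_le_brf2 (p : ℤ),
    one_le_brf2 (m : ℤ), sq_nonneg ((p : ℝ) - (m : ℝ))]

/-- telescoping bound on the sum of inverses. -/
lemma sum_inv_brf2 (k : ℕ) :
    ∑ p ∈ Finset.range (k + 1), (brf (p : ℤ) 2)⁻¹ ≤ 3 - (br (k : ℤ))⁻¹ := by
  induction k with
  | zero => simp [brf_two, br]; norm_num
  | succ n ih =>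
    rw [Finset.sum_range_succ]
    rcases Nat.eq_zero_or_pos n with h | h
    · subst h
      simp [brf_two, br]
      norm_num
    · have hn1 : (1 : ℝ) ≤ (n : ℝ) := by exact_mod_cast h
      have hbn : br (n : ℤ) = (n : ℝ) := max_eq_left (by push_cast; linarith)
      have hbn1 : br ((n + 1 : ℕ) : ℤ) = (n : ℝ) + 1 := by
        rw [br, max_eq_left (by push_cast; linarith)]; push_cast; ring
      have hval : brf ((n + 1 : ℕ) : ℤ) 2 = ((n : ℝ) + 1) * (n : ℝ) := by
        rw [brf2_val (n + 1) (by omega)]; push_cast; ring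
      rw [hval, hbn1]
      rw [hbn] at ih
      have hpos : (0 : ℝ) < (n : ℝ) := by linarith
      have hid : (((n : ℝ) + 1) * (n : ℝ))⁻¹ = (n : ℝ)⁻¹ - ((n : ℝ) + 1)⁻¹ := by
        field_simp; ring
      linarith

lemma sum_inv_sq_brf2 (k : ℕ) :
    ∑ p ∈ Finset.range (k + 1), ((brf (p : ℤ) 2)⁻¹) ^ 2 ≤ 3 := by
  have h1 : ∀ p ∈ Finset.range (k + 1),
      ((brf (p : ℤ) 2)⁻¹) ^ 2 ≤ (brf (p : ℤ) 2)⁻¹ := by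
    intro p _
    have h := one_le_brf2 (p : ℤ)
    have hpos := brf2_pos (p : ℤ)
    have hle : (brf (p : ℤ) 2)⁻¹ ≤ 1 := by
      rw [inv_le_one_iff₀]; right; exact h
    have hnn : 0 ≤ (brf (p : ℤ) 2)⁻¹ := by positivity
    nlinarith
  have h2 := sum_inv_brf2 k
  have h3 : 0 < br (k : ℤ) := lt_of_lt_of_le one_pos (one_le_br _)
  have h4 : 0 ≤ (br (k : ℤ))⁻¹ := by positivity
  calc ∑ p ∈ Finset.range (k + 1), ((brf (p : ℤ) 2)⁻¹) ^ 2
      ≤ ∑ p ∈ Finset.range (k + 1), (brf (p : ℤ) 2)⁻¹ := Finset.sum_le_sum h1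
    _ ≤ 3 - (br (k : ℤ))⁻¹ := h2
    _ ≤ 3 := by linarith

/-- the one-dimensional sum is bounded by 972. -/
lemma one_dim (k : ℕ) :
    ∑ p ∈ Finset.range (k + 1),
      (brf (k : ℤ) 2 / (brf (p : ℤ) 2 * brf ((k : ℤ) - p) 2)) ^ 2 ≤ 972 := by
  have key : ∀ p ∈ Finset.range (k + 1),
      (brf (k : ℤ) 2 / (brf (p : ℤ) 2 * brf ((k : ℤ) - p) 2)) ^ 2 ≤
        162 * (((brf (p : ℤ) 2)⁻¹) ^ 2 + ((brf ((k : ℤ) - p) 2)⁻¹) ^ 2) := by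
    intro p hp
    have hp' : p ≤ k := by
      simp only [Finset.mem_range] at hp; omega
    set a := brf (p : ℤ) 2 with ha
    set b := brf ((k : ℤ) - p) 2 with hb
    have hapos : 0 < a := brf2_pos _
    have hbpos : 0 < b := brf2_pos _
    have hN : brf (k : ℤ) 2 ≤ 9 * (a + b) := key_bound k p hp'
    have hNpos : 0 < brf (k : ℤ) 2 := brf2_pos _
    have h1 : brf (k : ℤ) 2 / (a * b) ≤ 9 * (a⁻¹ + b⁻¹) := by
      rw [div_le_iff₀ (by positivity)]
      have : (9 * (a⁻¹ + b⁻¹)) * (a * b) = 9 * (a + b) := by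
        field_simp; ring
      rw [this]; exact hN
    have h0 : 0 ≤ brf (k : ℤ) 2 / (a * b) := by positivity
    have h2 : (brf (k : ℤ) 2 / (a * b)) ^ 2 ≤ (9 * (a⁻¹ + b⁻¹)) ^ 2 := by
      apply pow_le_pow_left₀ h0 h1
    have h3 : (9 * (a⁻¹ + b⁻¹)) ^ 2 ≤ 162 * ((a⁻¹) ^ 2 + (b⁻¹) ^ 2) := by
      nlinarith [sq_nonneg (a⁻¹ - b⁻¹)]
    linarith
  have hre : ∑ p ∈ Finset.range (k + 1), ((brf ((k : ℤ) - p) 2)⁻¹) ^ 2 =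
      ∑ p ∈ Finset.range (k + 1), ((brf (p : ℤ) 2)⁻¹) ^ 2 := by
    rw [← Finset.sum_range_reflect (fun p => ((brf (p : ℤ) 2)⁻¹) ^ 2) (k + 1)]
    apply Finset.sum_congr rfl
    intro p hp
    simp only [Finset.mem_range] at hp
    have harg : (k : ℤ) - (p : ℤ) = ((k + 1 - 1 - p : ℕ) : ℤ) := by omega
    rw [harg]
  calc ∑ p ∈ Finset.range (k + 1),
        (brf (k : ℤ) 2 / (brf (p : ℤ) 2 * brf ((k : ℤ) - p) 2)) ^ 2
      ≤ ∑ p ∈ Finset.range (k + 1),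
          162 * (((brf (p : ℤ) 2)⁻¹) ^ 2 + ((brf ((k : ℤ) - p) 2)⁻¹) ^ 2) :=
        Finset.sum_le_sum key
    _ = 162 * (∑ p ∈ Finset.range (k + 1), ((brf (p : ℤ) 2)⁻¹) ^ 2 +
          ∑ p ∈ Finset.range (k + 1), ((brf ((k : ℤ) - p) 2)⁻¹) ^ 2) := by
        simp only [mul_add, Finset.mul_sum, Finset.sum_add_distrib]
    _ ≤ 972 := by
        rw [hre]
        have := sum_inv_sq_brf2 k
        linarith

/-- there is a universal constant `C > 0` such that for all `k, l ≥ 0`,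
`∑_{p=0}^k ∑_{q=0}^l ([k]_2 [l]_2 / ([p]_2 [k-p]_2 [q]_2 [l-q]_2))^2 ≤ C`. -/
theorem sum_sq_ratio_brf_two_le :
    ∃ C : ℝ, 0 < C ∧ ∀ k l : ℕ,
      ∑ p ∈ Finset.range (k + 1), ∑ q ∈ Finset.range (l + 1),
        ((brf k 2 * brf l 2) /
          (brf p 2 * brf ((k : ℤ) - p) 2 * brf q 2 * brf ((l : ℤ) - q) 2)) ^ 2
        ≤ C := by
  refine ⟨972 ^ 2, by norm_num, fun k l => ?_⟩
  have hsplit : ∀ p q : ℕ,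
      ((brf k 2 * brf l 2) /
        (brf p 2 * brf ((k : ℤ) - p) 2 * brf q 2 * brf ((l : ℤ) - q) 2)) ^ 2 =
      (brf (k : ℤ) 2 / (brf (p : ℤ) 2 * brf ((k : ℤ) - p) 2)) ^ 2 *
      (brf (l : ℤ) 2 / (brf (q : ℤ) 2 * brf ((l : ℤ) - q) 2)) ^ 2 := by
    intro p q
    rw [← mul_pow, div_mul_div_comm]
    congr 1
    ring
  calc ∑ p ∈ Finset.range (k + 1), ∑ q ∈ Finset.range (l + 1),
        ((brf k 2 * brf l 2) /
          (brf p 2 * brf ((k : ℤ) - p) 2 * brf q 2 * brf ((l : ℤ) - q) 2)) ^ 2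
      = (∑ p ∈ Finset.range (k + 1),
          (brf (k : ℤ) 2 / (brf (p : ℤ) 2 * brf ((k : ℤ) - p) 2)) ^ 2) *
        (∑ q ∈ Finset.range (l + 1),
          (brf (l : ℤ) 2 / (brf (q : ℤ) 2 * brf ((l : ℤ) - q) 2)) ^ 2) := by
        rw [Finset.sum_mul_sum]
        exact Finset.sum_congr rfl fun p _ => Finset.sum_congr rfl fun q _ => hsplit p q
    _ ≤ 972 * 972 := by
        apply mul_le_mul (one_dim k) (one_dim l) (by positivity) (by norm_num)
    _ = 972 ^ 2 := by norm_num
end
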